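/- arXiv:1212.5443 — 2 statements merged into one kernel-verified Lean document; each statement's English description precedes it below -/
import Mathlib

section
/- Let n and m be fixed with m ≤ n². Let (a,b) be any loop-digraphic list with a nonincreasing and Σa_i = m which is not a minconvex list. Then for any permutation σ, the minconvex list (α, α_σ) satisfies N_1(α, α_σ) > N_1(a,b), i.e., minconvex lists have strictly more loop-digraph realizations. -/
open Finset

/-- Partial sum of the first `k` entries of `a`. -/
def partSum {n : ℕ} (a : Fin n → ℕ) (k : ℕ) : ℕ :=
  ∑ i : Fin n, if (i : ℕ) < k then a i else 0

/-- `a ≺ a'` : `a` is majorized by `a'`. -/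
def Majorized {n : ℕ} (a a' : Fin n → ℕ) : Prop :=
  (∀ k : ℕ, partSum a k ≤ partSum a' k) ∧ ∑ i, a i = ∑ i, a' i

/-- `a` is nonincreasing. -/
def Nonincreasing {n : ℕ} (a : Fin n → ℕ) : Prop :=
  ∀ i j : Fin n, i ≤ j → a j ≤ a i

/-- `b` is nondecreasing. -/
def Nondecreasing {n : ℕ} (b : Fin n → ℕ) : Prop :=
  ∀ i j : Fin n, i ≤ j → b i ≤ b j

/-- `a` is obtained from `a'` by a unit `(i,j)`-transfer. -/
def UnitTransfer {n : ℕ} (a' a : Fin n → ℕ) (i j : Fin n) : Prop :=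
  i < j ∧ a' j + 2 ≤ a' i ∧
  a = Function.update (Function.update a' i (a' i - 1)) j (a' j + 1)

/-- Row sum of a 0-1 matrix. -/
def rowSum {n : ℕ} (M : Fin n → Fin n → Bool) (i : Fin n) : ℕ :=
  ∑ j, if M i j then 1 else 0

/-- Column sum of a 0-1 matrix. -/
def colSum {n : ℕ} (M : Fin n → Fin n → Bool) (j : Fin n) : ℕ :=
  ∑ i, if M i j then 1 else 0

/-- Number of loop-digraph realizations of `(a,b)`:
`n×n` 0-1 matrices with row sums `b` and column sums `a`. -/
noncomputable def N1 {n : ℕ} (a b : Fin n → ℕ) : ℕ :=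
  Nat.card {M : Fin n → Fin n → Bool //
    (∀ i, rowSum M i = b i) ∧ (∀ j, colSum M j = a j)}

def LoopDigraphic {n : ℕ} (a b : Fin n → ℕ) : Prop := 0 < N1 a b

/-- Number of digraph realizations of `(a,b)`:
`n×n` 0-1 matrices with zero diagonal, row sums `b` and column sums `a`. -/
noncomputable def N2 {n : ℕ} (a b : Fin n → ℕ) : ℕ :=
  Nat.card {M : Fin n → Fin n → Bool //
    (∀ i, M i i = false) ∧ (∀ i, rowSum M i = b i) ∧ (∀ j, colSum M j = a j)}

def Digraphic {n : ℕ} (a b : Fin n → ℕ) : Prop := 0 < N2 a b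

/-- Number of simple graph realizations of `a` (symmetric 0-1 adjacency matrices
with zero diagonal and degrees `a`). -/
noncomputable def N3 {n : ℕ} (a : Fin n → ℕ) : ℕ :=
  Nat.card {M : Fin n → Fin n → Bool //
    (∀ i j, M i j = M j i) ∧ (∀ i, M i i = false) ∧ (∀ i, rowSum M i = a i)}

def Graphic {n : ℕ} (a : Fin n → ℕ) : Prop := 0 < N3 a

/-- The minconvex list for parameters `n, m`. -/
def minconvex (n m : ℕ) : Fin n → ℕ :=
  fun i => if (i : ℕ) < m % n then m / n + 1 else m / n

/-- `(a,b)` is lexicographically nonincreasing. -/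
def LexNonincreasing {n : ℕ} (a b : Fin n → ℕ) : Prop :=
  ∀ i j : Fin n, i ≤ j → (a j < a i ∨ (a i = a j ∧ b j ≤ b i))


section AuxStmt13
open Finset
variable {n : ℕ}

lemma N1_eq_card (a b : Fin n → ℕ) :
    N1 a b = (univ.filter fun M : Fin n → Fin n → Bool =>
      (∀ i, rowSum M i = b i) ∧ (∀ j, colSum M j = a j)).card := by
  rw [N1, Nat.card_eq_fintype_card, Fintype.card_subtype]

lemma N1_comp_right (a b : Fin n → ℕ) (σ : Equiv.Perm (Fin n)) :
    N1 a (b ∘ σ) = N1 a b := by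
  refine Nat.card_congr ⟨fun M => ⟨fun r c => M.1 (σ.symm r) c, ?_, ?_⟩,
    fun M => ⟨fun r c => M.1 (σ r) c, ?_, ?_⟩, ?_, ?_⟩
  · intro i
    have := M.2.1 (σ.symm i)
    simpa [rowSum] using this
  · intro j
    have := M.2.2 j
    rw [← this]
    simp only [colSum]
    simpa using Equiv.sum_comp σ.symm (fun r => if M.1 r j then (1:ℕ) else 0)
  · intro i
    have := M.2.1 (σ i)
    simpa [rowSum, Function.comp] using this
  · intro j
    have := M.2.2 j
    rw [← this]
    simp only [colSum]
    simpa using Equiv.sum_comp σ (fun r => if M.1 r j then (1:ℕ) else 0)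
  · intro M; ext r c; simp
  · intro M; ext r c; simp

lemma N1_swap (a b : Fin n → ℕ) : N1 a b = N1 b a := by
  refine Nat.card_congr ⟨fun M => ⟨fun r c => M.1 c r, ?_, ?_⟩,
    fun M => ⟨fun r c => M.1 c r, ?_, ?_⟩, ?_, ?_⟩
  · intro i; exact M.2.2 i
  · intro j; exact M.2.1 j
  · intro i; exact M.2.2 i
  · intro j; exact M.2.1 j
  · intro M; rfl
  · intro M; rfl

lemma N1_comp_left (a b : Fin n → ℕ) (σ : Equiv.Perm (Fin n)) :
    N1 (a ∘ σ) b = N1 a b := by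
  rw [N1_swap, N1_comp_right, N1_swap]

end AuxStmt13
section AuxStmt13b
open Finset
variable {n : ℕ}

lemma choose_step_le (t x : ℕ) (hx : 1 ≤ x) (hgap : t + 2 ≤ 2*x) :
    Nat.choose t x ≤ Nat.choose t (x-1) := by
  rcases lt_or_ge t x with h | h
  · simp [Nat.choose_eq_zero_of_lt h]
  · have key : Nat.choose t x * x = Nat.choose t (x-1) * (t - (x-1)) := by
      have := Nat.choose_succ_right_eq t (x-1)
      rwa [Nat.sub_add_cancel hx] at this
    have h1 : t - (x-1) < x := by omega
    have h2 : 0 < x := hx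
    nlinarith [Nat.choose_pos h, Nat.choose_pos (show x - 1 ≤ t by omega)]

lemma choose_step_lt (t x : ℕ) (hx : 1 ≤ x) (hgap : t + 2 ≤ 2*x) (hxt : x ≤ t) :
    Nat.choose t x < Nat.choose t (x-1) := by
  have key : Nat.choose t x * x = Nat.choose t (x-1) * (t - (x-1)) := by
    have := Nat.choose_succ_right_eq t (x-1)
    rwa [Nat.sub_add_cancel hx] at this
  have hpos : 0 < Nat.choose t x := Nat.choose_pos hxt
  have h1 : t - (x-1) < x := by omega
  nlinarith

/-- split a sum over `Fin n` at two distinct indices -/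
lemma sum_split (f : Fin n → ℕ) {i j : Fin n} (hij : i ≠ j) :
    ∑ c, f c = f i + f j + ∑ c ∈ (univ.erase i).erase j, f c := by
  have hj : j ∈ univ.erase i := by simp [Ne.symm, hij.symm]
  rw [← Finset.sum_erase_add univ f (mem_univ i),
      ← Finset.sum_erase_add (univ.erase i) f hj]
  ring

lemma sum_congr_off_two {f g : Fin n → ℕ} {i j : Fin n} (hij : i ≠ j)
    (hsum : f i + f j = g i + g j) (hoff : ∀ c, c ≠ i → c ≠ j → f c = g c) :
    ∑ c, f c = ∑ c, g c := by
  rw [sum_split f hij, sum_split g hij, hsum]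
  congr 1
  refine Finset.sum_congr rfl ?_
  intro c hc
  simp only [mem_erase] at hc
  exact hoff c hc.2.1 hc.1

lemma bool_count_split (u v : Fin n → Bool) :
    (∑ r, if u r then (1:ℕ) else 0) =
      (∑ r, if u r && v r then (1:ℕ) else 0) +
      (∑ r, if u r && !v r then (1:ℕ) else 0) := by
  rw [← Finset.sum_add_distrib]
  refine Finset.sum_congr rfl fun r _ => ?_
  cases hu : u r <;> cases hv : v r <;> simp

end AuxStmt13b
section AuxStmt13c
open Finset
variable {n : ℕ}

/-- symmetrize columns i,j of M : column i gets AND, column j gets OR -/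
def frameM (i j : Fin n) (M : Fin n → Fin n → Bool) : Fin n → Fin n → Bool :=
  fun r c => if c = i then M r i && M r j else if c = j then M r i || M r j else M r c

def reconM (i j : Fin n) (R : Fin n → Fin n → Bool) (S : Finset (Fin n)) :
    Fin n → Fin n → Bool :=
  fun r c => if c = i then (R r i || decide (r ∈ S))
    else if c = j then (R r j && !decide (r ∈ S)) else R r c

lemma colSum_mono_split (R : Fin n → Fin n → Bool) (i j : Fin n)
    (hmono : ∀ r, R r i = true → R r j = true) :
    colSum R j = colSum R i +
      (univ.filter fun r => R r i = false ∧ R r j = true).card := by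
  rw [colSum, bool_count_split (fun r => R r j) (fun r => R r i), Finset.card_filter]
  congr 1
  · rw [colSum]
    refine Finset.sum_congr rfl fun r _ => ?_
    cases h : R r i
    · simp
    · simp [hmono r h]
  · refine Finset.sum_congr rfl fun r _ => ?_
    cases h : R r i <;> cases h2 : R r j <;> simp [h, h2]

end AuxStmt13c
section AuxStmt13d
open Finset
variable {n : ℕ}

lemma frameM_i (i j : Fin n) (M : Fin n → Fin n → Bool) (r : Fin n) :
    frameM i j M r i = (M r i && M r j) := by simp [frameM]

lemma frameM_j (i j : Fin n) (hij : i ≠ j) (M : Fin n → Fin n → Bool) (r : Fin n) :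
    frameM i j M r j = (M r i || M r j) := by simp [frameM, Ne.symm hij]

lemma frameM_other (i j : Fin n) (M : Fin n → Fin n → Bool) (r c : Fin n)
    (hci : c ≠ i) (hcj : c ≠ j) : frameM i j M r c = M r c := by
  simp [frameM, hci, hcj]

lemma reconM_i (i j : Fin n) (R : Fin n → Fin n → Bool) (S : Finset (Fin n)) (r : Fin n) :
    reconM i j R S r i = (R r i || decide (r ∈ S)) := by simp [reconM]

lemma reconM_j (i j : Fin n) (hij : i ≠ j) (R : Fin n → Fin n → Bool)
    (S : Finset (Fin n)) (r : Fin n) :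
    reconM i j R S r j = (R r j && !decide (r ∈ S)) := by simp [reconM, Ne.symm hij]

lemma reconM_other (i j : Fin n) (R : Fin n → Fin n → Bool) (S : Finset (Fin n))
    (r c : Fin n) (hci : c ≠ i) (hcj : c ≠ j) : reconM i j R S r c = R r c := by
  simp [reconM, hci, hcj]

lemma recon_frame (i j : Fin n) (hij : i ≠ j) (M : Fin n → Fin n → Bool) :
    M = reconM i j (frameM i j M)
      (univ.filter fun r => M r i = true ∧ M r j = false) := by
  funext r c
  by_cases hc : c = i
  · rw [hc, reconM_i, frameM_i]
    cases h1 : M r i <;> cases h2 : M r j <;> simp [h1, h2]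
  · by_cases hc2 : c = j
    · rw [hc2, reconM_j i j hij, frameM_j i j hij]
      cases h1 : M r i <;> cases h2 : M r j <;> simp [h1, h2]
    · rw [reconM_other i j _ _ r c hc hc2, frameM_other i j _ r c hc hc2]

lemma fiber_card (b A : Fin n → ℕ) (i j : Fin n) (hij : i ≠ j)
    (R : Fin n → Fin n → Bool)
    (hRrow : ∀ r, rowSum R r = b r)
    (hRmono : ∀ r, R r i = true → R r j = true)
    (hRsum : colSum R i + colSum R j = A i + A j)
    (hRoff : ∀ c, c ≠ i → c ≠ j → colSum R c = A c)
    (hdA : colSum R i ≤ A i) :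
    (univ.filter fun M : Fin n → Fin n → Bool =>
        ((∀ r, rowSum M r = b r) ∧ (∀ c, colSum M c = A c)) ∧ frameM i j M = R).card
      = Nat.choose (univ.filter fun r => R r i = false ∧ R r j = true).card
          (A i - colSum R i) := by
  classical
  rw [← Finset.card_powersetCard]
  refine Finset.card_bij
    (fun M _ => univ.filter fun r => M r i = true ∧ M r j = false) ?_ ?_ ?_
  · -- membership
    intro M hM
    obtain ⟨⟨hrow, hcol⟩, hfM⟩ := (mem_filter.mp hM).2
    have hRi : ∀ r, R r i = (M r i && M r j) := fun r => by
      rw [← hfM, frameM_i]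
    have hRj : ∀ r, R r j = (M r i || M r j) := fun r => by
      rw [← hfM, frameM_j i j hij]
    have hsub : (univ.filter fun r => M r i = true ∧ M r j = false)
        ⊆ (univ.filter fun r => R r i = false ∧ R r j = true) := by
      intro r hr
      simp only [mem_filter, mem_univ, true_and] at hr ⊢
      rw [hRi r, hRj r, hr.1, hr.2]
      simp
    have hsplit : colSum M i = colSum R i +
        (univ.filter fun r => M r i = true ∧ M r j = false).card := by
      rw [colSum, bool_count_split (fun r => M r i) (fun r => M r j),
        Finset.card_filter]
      congr 1
      · rw [colSum]
        refine Finset.sum_congr rfl fun r _ => ?_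
        rw [hRi r]
      · refine Finset.sum_congr rfl ?_
        intro r _
        cases h1 : M r i <;> cases h2 : M r j <;> simp [h1, h2]
    rw [hcol i] at hsplit
    refine Finset.mem_powersetCard.mpr ⟨hsub, by omega⟩
  · -- injectivity
    intro M₁ h₁ M₂ h₂ heq
    obtain ⟨_, hfM₁⟩ := (mem_filter.mp h₁).2
    obtain ⟨_, hfM₂⟩ := (mem_filter.mp h₂).2
    have heq' : (univ.filter fun r => M₁ r i = true ∧ M₁ r j = false)
        = (univ.filter fun r => M₂ r i = true ∧ M₂ r j = false) := heq
    have e1 := recon_frame i j hij M₁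
    have e2 := recon_frame i j hij M₂
    rw [hfM₁] at e1
    rw [hfM₂] at e2
    rw [e1, e2, heq']
  · -- surjectivity
    intro S hS
    obtain ⟨hsub, hcard⟩ := Finset.mem_powersetCard.mp hS
    have hmemT : ∀ r ∈ S, R r i = false ∧ R r j = true := by
      intro r hr
      have := hsub hr
      simpa using this
    have hframe : frameM i j (reconM i j R S) = R := by
      funext r c
      by_cases hc : c = i
      · rw [hc, frameM_i, reconM_i, reconM_j i j hij]
        by_cases hr : r ∈ S
        · simp [hr, (hmemT r hr).1, (hmemT r hr).2]
        · simp only [hr, decide_false, Bool.or_false, Bool.not_false, Bool.and_true]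
          cases h1 : R r i
          · simp
          · simp [hRmono r h1]
      · by_cases hc2 : c = j
        · rw [hc2, frameM_j i j hij, reconM_i, reconM_j i j hij]
          by_cases hr : r ∈ S
          · simp [hr, (hmemT r hr).2]
          · simp only [hr, decide_false, Bool.or_false, Bool.not_false, Bool.and_true]
            cases h1 : R r i
            · simp
            · simp [hRmono r h1]
        · rw [frameM_other i j _ r c hc hc2, reconM_other i j _ _ r c hc hc2]
    have hrows : ∀ r, rowSum (reconM i j R S) r = b r := by
      intro r
      rw [← hRrow r, rowSum, rowSum]
      refine sum_congr_off_two hij ?_ ?_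
      · rw [reconM_i, reconM_j i j hij]
        by_cases hr : r ∈ S
        · simp [hr, (hmemT r hr).1, (hmemT r hr).2]
        · simp [hr]
      · intro c hci hcj
        rw [reconM_other i j _ _ r c hci hcj]
    have hcoli : colSum (reconM i j R S) i = colSum R i + S.card := by
      rw [colSum, colSum]
      have h1 : (∑ r, if reconM i j R S r i then (1:ℕ) else 0)
          = ∑ r, ((if R r i then (1:ℕ) else 0) + (if r ∈ S then 1 else 0)) := by
        refine Finset.sum_congr rfl fun r _ => ?_
        rw [reconM_i]
        by_cases hr : r ∈ S
        · simp [hr, (hmemT r hr).1]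
        · simp [hr]
      rw [h1, Finset.sum_add_distrib]
      have h2 : (∑ r, if r ∈ S then (1:ℕ) else 0) = S.card := by
        rw [← Finset.card_filter]
        congr 1
        simp
      rw [h2]
    have hcolj : colSum (reconM i j R S) j + S.card = colSum R j := by
      rw [colSum, colSum]
      have h1 : (∑ r, if R r j then (1:ℕ) else 0)
          = ∑ r, ((if reconM i j R S r j then (1:ℕ) else 0)
              + (if r ∈ S then 1 else 0)) := by
        refine Finset.sum_congr rfl fun r _ => ?_
        rw [reconM_j i j hij]
        by_cases hr : r ∈ S
        · simp [hr, (hmemT r hr).2]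
        · simp [hr]
      rw [h1, Finset.sum_add_distrib]
      have h2 : (∑ r, if r ∈ S then (1:ℕ) else 0) = S.card := by
        rw [← Finset.card_filter]
        congr 1
        simp
      rw [h2]
    have hcols : ∀ c, colSum (reconM i j R S) c = A c := by
      intro c
      by_cases hc : c = i
      · rw [hc]; omega
      · by_cases hc2 : c = j
        · rw [hc2]; omega
        · rw [← hRoff c hc hc2, colSum, colSum]
          refine Finset.sum_congr rfl fun r _ => ?_
          rw [reconM_other i j _ _ r c hc hc2]
    refine ⟨reconM i j R S, mem_filter.mpr ⟨mem_univ _, ⟨⟨hrows, hcols⟩, hframe⟩⟩, ?_⟩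
    ext r
    simp only [mem_filter, mem_univ, true_and, reconM_i, reconM_j i j hij]
    by_cases hr : r ∈ S
    · simp [hr, (hmemT r hr).1, (hmemT r hr).2]
    · simp only [hr, decide_false, Bool.or_false, Bool.not_false, Bool.and_true,
        iff_false]
      intro hcon
      have := hRmono r hcon.1
      rw [this] at hcon
      exact absurd hcon.2 (by simp)
end AuxStmt13d
section AuxStmt13e
open Finset
variable {n : ℕ}

lemma frame_mem (b A : Fin n → ℕ) (i j : Fin n) (hij : i ≠ j)
    (M : Fin n → Fin n → Bool)
    (hrow : ∀ r, rowSum M r = b r) (hcol : ∀ c, colSum M c = A c) :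
    (∀ r, rowSum (frameM i j M) r = b r) ∧
    (∀ c, c ≠ i → c ≠ j → colSum (frameM i j M) c = A c) ∧
    (∀ r, frameM i j M r i = true → frameM i j M r j = true) ∧
    (colSum (frameM i j M) i + colSum (frameM i j M) j = A i + A j) := by
  refine ⟨?_, ?_, ?_, ?_⟩
  · intro r
    rw [← hrow r, rowSum, rowSum]
    refine sum_congr_off_two hij ?_ ?_
    · rw [frameM_i, frameM_j i j hij]
      cases h1 : M r i <;> cases h2 : M r j <;> simp [h1, h2]
    · intro c hci hcj
      rw [frameM_other i j _ r c hci hcj]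
  · intro c hci hcj
    rw [← hcol c, colSum, colSum]
    refine Finset.sum_congr rfl ?_
    intro r _
    rw [frameM_other i j _ r c hci hcj]
  · intro r
    rw [frameM_i, frameM_j i j hij]
    cases h1 : M r i <;> cases h2 : M r j <;> simp [h1, h2]
  · rw [← hcol i, ← hcol j, colSum, colSum, colSum, colSum,
      ← Finset.sum_add_distrib, ← Finset.sum_add_distrib]
    refine Finset.sum_congr rfl ?_
    intro r _
    rw [frameM_i, frameM_j i j hij]
    cases h1 : M r i <;> cases h2 : M r j <;> simp [h1, h2]

lemma transfer_lt (a a' b : Fin n → ℕ) (i j : Fin n) (hij : i ≠ j)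
    (hgap : a j + 2 ≤ a i)
    (hi : a' i = a i - 1) (hj : a' j = a j + 1)
    (hoff : ∀ c, c ≠ i → c ≠ j → a' c = a c)
    (hpos : 0 < N1 a b) : N1 a b < N1 a' b := by
  classical
  have hsum' : a' i + a' j = a i + a j := by omega
  set Frames : Finset (Fin n → Fin n → Bool) :=
    univ.filter (fun R => (∀ r, rowSum R r = b r) ∧
      (∀ c, c ≠ i → c ≠ j → colSum R c = a c) ∧
      (∀ r, R r i = true → R r j = true) ∧
      (colSum R i + colSum R j = a i + a j)) with hFrames
  -- basic facts about members of Frames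
  have hmemF : ∀ R ∈ Frames, colSum R i < a i ∧
      colSum R j = colSum R i +
        (univ.filter fun r => R r i = false ∧ R r j = true).card := by
    intro R hR
    obtain ⟨-, -, hRmono, hRsum⟩ := (mem_filter.mp hR).2
    have hsplit := colSum_mono_split R i j hRmono
    constructor
    · omega
    · exact hsplit
  have key : ∀ A : Fin n → ℕ, A i + A j = a i + a j →
      (∀ c, c ≠ i → c ≠ j → A c = a c) → (∀ R ∈ Frames, colSum R i ≤ A i) →
      N1 A b = ∑ R ∈ Frames,
        Nat.choose (univ.filter fun r => R r i = false ∧ R r j = true).card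
          (A i - colSum R i) := by
    intro A hA hAoff hAd
    rw [N1_eq_card]
    rw [Finset.card_eq_sum_card_fiberwise (f := frameM i j) (t := Frames) ?_]
    · refine Finset.sum_congr rfl ?_
      intro R hR
      obtain ⟨hRrow, hRoff, hRmono, hRsum⟩ := (mem_filter.mp hR).2
      rw [Finset.filter_filter]
      rw [fiber_card b A i j hij R hRrow hRmono (by omega)
        (fun c hci hcj => by rw [hRoff c hci hcj, hAoff c hci hcj]) (hAd R hR)]
    · intro M hM
      obtain ⟨hrow, hcol⟩ := (mem_filter.mp hM).2
      obtain ⟨f1, f2, f3, f4⟩ := frame_mem b A i j hij M hrow hcol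
      rw [hFrames, mem_coe, mem_filter]
      exact ⟨mem_univ _, f1,
        fun c hci hcj => by rw [f2 c hci hcj, hAoff c hci hcj], f3, by omega⟩
  have hda : ∀ R ∈ Frames, colSum R i ≤ a i := fun R hR => le_of_lt (hmemF R hR).1
  have hda' : ∀ R ∈ Frames, colSum R i ≤ a' i := fun R hR => by
    have := (hmemF R hR).1; omega
  have e1 : N1 a b = ∑ R ∈ Frames,
      Nat.choose (univ.filter fun r => R r i = false ∧ R r j = true).card
        (a i - colSum R i) := key a rfl (fun _ _ _ => rfl) hda
  have e2 : N1 a' b = ∑ R ∈ Frames,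
      Nat.choose (univ.filter fun r => R r i = false ∧ R r j = true).card
        (a' i - colSum R i) := key a' hsum' hoff hda'
  rw [e1, e2]
  clear e1 e2 key
  -- pointwise comparison
  have hle : ∀ R ∈ Frames,
      Nat.choose (univ.filter fun r => R r i = false ∧ R r j = true).card
        (a i - colSum R i) ≤
      Nat.choose (univ.filter fun r => R r i = false ∧ R r j = true).card
        (a' i - colSum R i) := by
    intro R hR
    obtain ⟨hd, ht⟩ := hmemF R hR
    obtain ⟨-, -, -, hRsum⟩ := (mem_filter.mp hR).2
    have hx : a' i - colSum R i = (a i - colSum R i) - 1 := by omega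
    rw [hx]
    exact choose_step_le _ (a i - colSum R i) (by omega) (by omega)
  refine Finset.sum_lt_sum hle ?_
  -- strict somewhere : take the frame of a witness
  rw [N1_eq_card] at hpos
  obtain ⟨M₀, hM₀⟩ := Finset.card_pos.mp hpos
  obtain ⟨hrow₀, hcol₀⟩ := (mem_filter.mp hM₀).2
  obtain ⟨f1, f2, f3, f4⟩ := frame_mem b a i j hij M₀ hrow₀ hcol₀
  obtain ⟨R₀, hR₀def⟩ : ∃ R, frameM i j M₀ = R := ⟨_, rfl⟩
  rw [hR₀def] at f1 f2 f3 f4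
  have hR₀mem : R₀ ∈ Frames := by
    rw [hFrames, mem_filter]
    exact ⟨mem_univ _, f1, f2, f3, f4⟩
  refine ⟨R₀, hR₀mem, ?_⟩
  obtain ⟨hd, ht⟩ := hmemF R₀ hR₀mem
  obtain ⟨hR₀row, hR₀off, hR₀mono, hR₀sum⟩ := (mem_filter.mp hR₀mem).2
  -- the fiber of R₀ for a is nonempty, hence the binomial is positive
  have hfibpos : 0 < Nat.choose
      (univ.filter fun r => R₀ r i = false ∧ R₀ r j = true).card
      (a i - colSum R₀ i) := by
    rw [← fiber_card b a i j hij R₀ hR₀row hR₀mono hR₀sum hR₀off (le_of_lt hd)]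
    refine Finset.card_pos.mpr ⟨M₀, ?_⟩
    exact mem_filter.mpr ⟨mem_univ _, ⟨⟨hrow₀, hcol₀⟩, hR₀def⟩⟩
  have hxt : a i - colSum R₀ i ≤
      (univ.filter fun r => R₀ r i = false ∧ R₀ r j = true).card := by
    by_contra hcon
    push_neg at hcon
    rw [Nat.choose_eq_zero_of_lt hcon] at hfibpos
    exact absurd hfibpos (by simp)
  have hx : a' i - colSum R₀ i = (a i - colSum R₀ i) - 1 := by omega
  rw [hx]
  exact choose_step_lt _ (a i - colSum R₀ i) (by omega) (by omega) hxt

end AuxStmt13e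
section AuxStmt13f
open Finset
variable {n : ℕ}

lemma card_filter_val_lt (s : ℕ) (hs : s ≤ n) :
    (univ.filter fun k : Fin n => (k : ℕ) < s).card = s := by
  rcases lt_or_eq_of_le hs with h | h
  · have he : (univ.filter fun k : Fin n => (k:ℕ) < s)
        = Finset.Iio (⟨s, h⟩ : Fin n) := by
      ext k
      simp [Finset.mem_Iio, Fin.lt_def]
    rw [he, Fin.card_Iio]
  · have he : (univ.filter fun k : Fin n => (k:ℕ) < s) = univ := by
      ext k
      simp only [mem_filter, mem_univ, true_and, iff_true]
      have := k.isLt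
      omega
    rw [he, card_univ, Fintype.card_fin, h]

lemma sum_eq_of_N1_pos (a b : Fin n → ℕ) (h : 0 < N1 a b) :
    ∑ i, b i = ∑ j, a j := by
  rw [N1_eq_card] at h
  obtain ⟨M, hM⟩ := Finset.card_pos.mp h
  obtain ⟨hrow, hcol⟩ := (mem_filter.mp hM).2
  have h1 : ∑ i, b i = ∑ i, rowSum M i :=
    Finset.sum_congr rfl fun i _ => (hrow i).symm
  have h2 : ∑ j, a j = ∑ j, colSum M j :=
    Finset.sum_congr rfl fun j _ => (hcol j).symm
  rw [h1, h2]
  simp only [rowSum, colSum]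
  exact Finset.sum_comm

/-- descent: from any positive pair we can reach a balanced list, strictly
increasing `N1` unless already balanced. -/
lemma descent (b : Fin n → ℕ) (N : ℕ) :
    ∀ c : Fin n → ℕ, (∑ i, (c i)^2 ≤ N) → 0 < N1 c b →
    ∃ e : Fin n → ℕ, (∀ i j, e i ≤ e j + 1) ∧ (∑ i, e i = ∑ i, c i) ∧
      0 < N1 e b ∧ N1 c b ≤ N1 e b ∧
      ((¬ ∀ i j, c i ≤ c j + 1) → N1 c b < N1 e b) := by
  induction N with
  | zero =>
    intro c hN hpos
    have hbal : ∀ i j, c i ≤ c j + 1 := by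
      intro i j
      have h1 : (c i)^2 ≤ 0 := le_trans
        (Finset.single_le_sum (f := fun k => (c k)^2)
          (fun k _ => Nat.zero_le _) (mem_univ i)) hN
      nlinarith
    exact ⟨c, hbal, rfl, hpos, le_rfl, fun h => absurd hbal h⟩
  | succ N ih =>
    intro c hN hpos
    by_cases hbal : ∀ i j, c i ≤ c j + 1
    · exact ⟨c, hbal, rfl, hpos, le_rfl, fun h => absurd hbal h⟩
    · push_neg at hbal
      obtain ⟨i, j, hij⟩ := hbal
      have hne : i ≠ j := by rintro rfl; omega
      set c' : Fin n → ℕ :=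
        fun x => if x = i then c i - 1 else if x = j then c j + 1 else c x with hc'
      have hc'i : c' i = c i - 1 := by simp [hc']
      have hc'j : c' j = c j + 1 := by simp [hc', Ne.symm hne]
      have hc'off : ∀ x, x ≠ i → x ≠ j → c' x = c x := by
        intro x h1 h2; simp [hc', h1, h2]
      have hstep : N1 c b < N1 c' b :=
        transfer_lt c c' b i j hne (by omega) hc'i hc'j hc'off hpos
      have hsum' : ∑ x, c' x = ∑ x, c x := by
        refine sum_congr_off_two hne (by omega) hc'off
      have hsq : ∑ x, (c' x)^2 + 1 ≤ ∑ x, (c x)^2 := by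
        rw [sum_split (fun x => (c' x)^2) hne, sum_split (fun x => (c x)^2) hne]
        have hrest : ∑ x ∈ (univ.erase i).erase j, (c' x)^2
            = ∑ x ∈ (univ.erase i).erase j, (c x)^2 := by
          refine Finset.sum_congr rfl ?_
          intro x hx
          simp only [mem_erase] at hx
          rw [hc'off x hx.2.1 hx.1]
        rw [hrest, hc'i, hc'j]
        obtain ⟨u, hu⟩ : ∃ u, c i = u + 1 := ⟨c i - 1, by omega⟩
        rw [hu]
        simp only [Nat.add_sub_cancel]
        have hju : c j + 1 ≤ u := by omega
        nlinarith
      obtain ⟨e, he1, he2, he3, he4, he5⟩ :=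
        ih c' (by omega) (lt_trans hpos hstep)
      exact ⟨e, he1, by rw [he2, hsum'], he3,
        le_of_lt (lt_of_lt_of_le hstep he4),
        fun _ => lt_of_lt_of_le hstep he4⟩

/-- structure of balanced lists with given sum -/
lemma balanced_struct (hn : 0 < n) (c : Fin n → ℕ) (m : ℕ)
    (hsum : ∑ i, c i = m) (hbal : ∀ i j, c i ≤ c j + 1) :
    (∀ i, c i = m / n ∨ c i = m / n + 1) ∧
    (univ.filter fun i => c i = m / n + 1).card = m % n := by
  have hdm := Nat.div_add_mod m n
  have hrn : m % n < n := Nat.mod_lt _ hn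
  have hub : ∀ i, c i ≤ m / n + 1 := by
    by_contra hcon
    push_neg at hcon
    obtain ⟨i, hi⟩ := hcon
    have hall : ∀ k ∈ univ, m / n + 1 ≤ c k := by
      intro k _
      have := hbal i k
      omega
    have := Finset.card_nsmul_le_sum univ c (m / n + 1) hall
    rw [hsum, card_univ, Fintype.card_fin, smul_eq_mul] at this
    nlinarith
  have hlb : ∀ i, m / n ≤ c i := by
    by_contra hcon
    push_neg at hcon
    obtain ⟨i, hi⟩ := hcon
    have hall : ∀ k ∈ univ.erase i, c k ≤ m / n := by
      intro k _
      have := hbal k i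
      omega
    have hle := Finset.sum_le_card_nsmul (univ.erase i) c (m / n) hall
    rw [Finset.card_erase_of_mem (mem_univ i), card_univ, Fintype.card_fin,
      smul_eq_mul] at hle
    have hsplit : c i + ∑ x ∈ univ.erase i, c x = m := by
      rw [← hsum, Finset.add_sum_erase univ c (mem_univ i)]
    have hexp : n * (m / n) = (n - 1) * (m / n) + m / n := by
      obtain ⟨n', rfl⟩ : ∃ n', n = n' + 1 := ⟨n - 1, by omega⟩
      simp only [Nat.add_sub_cancel]
      ring
    have hle' : ∑ x ∈ univ.erase i, c x ≤ (n - 1) * (m / n) := hle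
    generalize hv : m / n = v at hi hle' hexp hdm
    generalize hr : m % n = r at hdm hrn
    linarith
  have hval : ∀ i, c i = m / n ∨ c i = m / n + 1 := by
    intro i
    have := hub i
    have := hlb i
    omega
  refine ⟨hval, ?_⟩
  have hsum2 : ∑ i, c i
      = ∑ i : Fin n, (m / n + if c i = m / n + 1 then 1 else 0) := by
    refine Finset.sum_congr rfl ?_
    intro i _
    rcases hval i with h | h <;> simp [h]
  rw [hsum2, Finset.sum_add_distrib, Finset.sum_const, card_univ,
    Fintype.card_fin, ← Finset.card_filter, smul_eq_mul] at hsum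
  omega

lemma balanced_perm (hn : 0 < n) (c : Fin n → ℕ) (m : ℕ)
    (hsum : ∑ i, c i = m) (hbal : ∀ i j, c i ≤ c j + 1) :
    ∃ σ : Equiv.Perm (Fin n), c = minconvex n m ∘ σ := by
  classical
  obtain ⟨hval, hcard⟩ := balanced_struct hn c m hsum hbal
  have hrn : m % n < n := Nat.mod_lt _ hn
  have hQcard : (univ.filter fun k : Fin n => (k : ℕ) < m % n).card = m % n :=
    card_filter_val_lt (m % n) (le_of_lt hrn)
  set p : Fin n → Prop := fun i => c i = m / n + 1 with hp
  set q : Fin n → Prop := fun k => (k : ℕ) < m % n with hq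
  have hcards : (univ.filter p).card = (univ.filter q).card := by
    rw [hcard, hQcard]
  have hcards' : (univ.filter fun i => ¬ p i).card
      = (univ.filter fun i => ¬ q i).card := by
    rw [Finset.filter_not, Finset.filter_not, Finset.card_sdiff_of_subset (filter_subset _ _),
      Finset.card_sdiff_of_subset (filter_subset _ _), hcards]
  have e1 : {x // x ∈ univ.filter p} ≃ {x // x ∈ univ.filter q} :=
    Finset.equivOfCardEq hcards
  have e2 : {x // x ∈ univ.filter fun i => ¬ p i}
      ≃ {x // x ∈ univ.filter fun i => ¬ q i} :=
    Finset.equivOfCardEq hcards'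
  have ep : {x // p x} ≃ {x // q x} :=
    ((Equiv.subtypeEquivRight (fun x => by simp)).trans e1).trans
      (Equiv.subtypeEquivRight (fun x => by simp))
  have en : {x // ¬ p x} ≃ {x // ¬ q x} :=
    ((Equiv.subtypeEquivRight (fun x => by simp)).trans e2).trans
      (Equiv.subtypeEquivRight (fun x => by simp))
  set σ : Equiv.Perm (Fin n) :=
    ((Equiv.sumCompl p).symm.trans ((ep.sumCongr en).trans
      (Equiv.sumCompl q))) with hσ
  have hσp : ∀ k, p k → q (σ k) := by
    intro k hk
    rw [hσ]
    simp only [Equiv.trans_apply, Equiv.sumCompl_symm_apply_of_pos hk,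
      Equiv.sumCongr_apply, Sum.map_inl]
    exact (ep ⟨k, hk⟩).2
  have hσn : ∀ k, ¬ p k → ¬ q (σ k) := by
    intro k hk
    rw [hσ]
    simp only [Equiv.trans_apply, Equiv.sumCompl_symm_apply_of_neg hk,
      Equiv.sumCongr_apply, Sum.map_inr]
    exact (en ⟨k, hk⟩).2
  refine ⟨σ, ?_⟩
  funext k
  simp only [Function.comp_apply, minconvex]
  by_cases hk : p k
  · rw [if_pos (hσp k hk)]
    exact hk
  · rw [if_neg (hσn k hk)]
    rcases hval k with h | h
    · exact h
    · exact absurd h hk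

lemma balanced_mono_eq (hn : 0 < n) (c : Fin n → ℕ) (m : ℕ)
    (hsum : ∑ i, c i = m) (hbal : ∀ i j, c i ≤ c j + 1)
    (hmono : Nonincreasing c) : c = minconvex n m := by
  obtain ⟨hval, hcard⟩ := balanced_struct hn c m hsum hbal
  funext k
  simp only [minconvex]
  by_cases hk : (k : ℕ) < m % n
  · rw [if_pos hk]
    rcases hval k with h | h
    · exfalso
      have hsub : (univ.filter fun i => c i = m / n + 1)
          ⊆ univ.filter fun i : Fin n => (i : ℕ) < (k : ℕ) := by
        intro l hl
        simp only [mem_filter, mem_univ, true_and] at hl ⊢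
        by_contra hcon
        push_neg at hcon
        have hkl : k ≤ l := by rwa [Fin.le_def]
        have := hmono k l hkl
        omega
      have hcle := Finset.card_le_card hsub
      rw [hcard, card_filter_val_lt (k : ℕ) (le_of_lt k.isLt)] at hcle
      omega
    · exact h
  · rw [if_neg hk]
    rcases hval k with h | h
    · exact h
    · exfalso
      have hsub : (univ.filter fun i : Fin n => (i : ℕ) < (k : ℕ) + 1)
          ⊆ univ.filter fun i => c i = m / n + 1 := by
        intro l hl
        simp only [mem_filter, mem_univ, true_and] at hl ⊢
        have hlk : l ≤ k := by rw [Fin.le_def]; omega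
        have h1 := hmono l k hlk
        have := hval l
        omega
      have hcle := Finset.card_le_card hsub
      rw [hcard, card_filter_val_lt ((k : ℕ) + 1) k.isLt] at hcle
      omega

end AuxStmt13f
theorem stmt13 {n : ℕ} (m : ℕ) (hm : m ≤ n * n) (a b : Fin n → ℕ)
    (hd : LoopDigraphic a b) (hmono : Nonincreasing a) (hsum : ∑ i, a i = m)
    (hnot : ¬ (a = minconvex n m ∧ ∃ σ : Equiv.Perm (Fin n), b = minconvex n m ∘ σ))
    (σ : Equiv.Perm (Fin n)) :
    N1 a b < N1 (minconvex n m) (minconvex n m ∘ σ) := by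
  classical
  rcases Nat.eq_zero_or_pos n with hn | hn
  · subst hn
    exact absurd ⟨funext fun i => i.elim0, 1, funext fun i => i.elim0⟩ hnot
  have hpos : 0 < N1 a b := hd
  have hsumb : ∑ i, b i = m := by rw [sum_eq_of_N1_pos a b hpos, hsum]
  obtain ⟨c, hc_bal, hc_sum, hc_pos, hc_le, hc_lt⟩ :=
    descent b (∑ i, (a i)^2) a le_rfl hpos
  have hc_sum' : ∑ i, c i = m := by rw [hc_sum, hsum]
  obtain ⟨τ, hτ⟩ := balanced_perm hn c m hc_sum' hc_bal
  have hcN : N1 c b = N1 (minconvex n m) b := by rw [hτ, N1_comp_left]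
  have hswap : N1 (minconvex n m) b = N1 b (minconvex n m) := N1_swap _ _
  have hb_pos : 0 < N1 b (minconvex n m) := by
    rw [← hswap, ← hcN]; exact lt_of_lt_of_le hpos hc_le
  obtain ⟨e, he_bal, he_sum, he_pos, he_le, he_lt⟩ :=
    descent (minconvex n m) (∑ i, (b i)^2) b le_rfl hb_pos
  have he_sum' : ∑ i, e i = m := by rw [he_sum, hsumb]
  obtain ⟨ρ, hρ⟩ := balanced_perm hn e m he_sum' he_bal
  have heN : N1 e (minconvex n m) = N1 (minconvex n m) (minconvex n m) := by
    rw [hρ, N1_comp_left]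
  have hfinal : N1 (minconvex n m) (minconvex n m ∘ σ)
      = N1 (minconvex n m) (minconvex n m) := N1_comp_right _ _ σ
  by_cases hbala : ∀ i j, a i ≤ a j + 1
  · have ha_eq : a = minconvex n m := balanced_mono_eq hn a m hsum hbala hmono
    have hb_unbal : ¬ ∀ i j, b i ≤ b j + 1 := by
      intro hbb
      exact hnot ⟨ha_eq, balanced_perm hn b m hsumb hbb⟩
    calc N1 a b ≤ N1 c b := hc_le
      _ = N1 b (minconvex n m) := by rw [hcN, hswap]
      _ < N1 e (minconvex n m) := he_lt hb_unbal
      _ = N1 (minconvex n m) (minconvex n m ∘ σ) := by rw [heN, hfinal]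
  · calc N1 a b < N1 c b := hc_lt hbala
      _ = N1 b (minconvex n m) := by rw [hcN, hswap]
      _ ≤ N1 e (minconvex n m) := he_le
      _ = N1 (minconvex n m) (minconvex n m ∘ σ) := by rw [heN, hfinal]
end

section
/- Let (a,b) be a lexicographically nonincreasing list of pairs (meaning (a_i,b_i) ≥_lex (a_j,b_j) whenever i ≤ j) and let (a',b) be a list such that a' yields a by a unit (i,j)-transfer. If (a',b) is digraphic, then N_2(a,b) > N_2(a',b) strictly. -/
open Finset

section aux
variable {n : ℕ}

def P2 (c b : Fin n → ℕ) (M : Fin n → Fin n → Bool) : Prop :=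
  (∀ r, M r r = false) ∧ (∀ r, rowSum M r = b r) ∧ (∀ q, colSum M q = c q)

instance (c b : Fin n → ℕ) (M : Fin n → Fin n → Bool) : Decidable (P2 c b M) := by
  unfold P2; infer_instance

lemma sum_split_s15 (g : Fin n → ℕ) {i j : Fin n} (hij : i ≠ j) :
    ∑ r, g r = g i + g j + ∑ r ∈ univ.filter (fun r => r ≠ i ∧ r ≠ j), g r := by
  rw [← Finset.sum_filter_add_sum_filter_not univ (fun r => r ≠ i ∧ r ≠ j)]
  have h : univ.filter (fun r => ¬(r ≠ i ∧ r ≠ j)) = ({i, j} : Finset (Fin n)) := by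
    ext r; simp [not_and_or, or_comm]; tauto
  rw [h, Finset.sum_pair hij]; ring

def Fr (i j : Fin n) (M : Fin n → Fin n → Bool) : Fin n → Fin n → Bool :=
  fun r c => if r = i ∨ r = j ∨ (c ≠ i ∧ c ≠ j) then M r c else false

def Uset (i j : Fin n) : Finset (Fin n) := univ.filter (fun r => r ≠ i ∧ r ≠ j)

def Fset (i j : Fin n) (M₁ : Fin n → Fin n → Bool) : Finset (Fin n) :=
  (Uset i j).filter (fun r => M₁ r i ≠ M₁ r j)

def t2 (i j : Fin n) (M₁ : Fin n → Fin n → Bool) : ℕ :=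
  ∑ r ∈ (Uset i j).filter (fun r => M₁ r i = M₁ r j), (if M₁ r i then 1 else 0)

lemma frame_cell {i j : Fin n} {M N : Fin n → Fin n → Bool} (h : Fr i j M = Fr i j N)
    {r c : Fin n} (hc : r = i ∨ r = j ∨ (c ≠ i ∧ c ≠ j)) : M r c = N r c := by
  have := congrFun (congrFun h r) c
  simpa [Fr, hc] using this

lemma bool_sum_eq {x y x₁ y₁ : Bool}
    (h : (if x then 1 else 0) + (if y then 1 else 0)
       = (if x₁ then (1:ℕ) else 0) + (if y₁ then 1 else 0)) (he : x₁ = y₁) :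
    x = x₁ ∧ y = y₁ := by
  cases x <;> cases y <;> cases x₁ <;> cases y₁ <;> simp_all

lemma bool_sum_ne {x y x₁ y₁ : Bool}
    (h : (if x then 1 else 0) + (if y then 1 else 0)
       = (if x₁ then (1:ℕ) else 0) + (if y₁ then 1 else 0)) (he : x₁ ≠ y₁) :
    y = !x := by
  cases x <;> cases y <;> cases x₁ <;> cases y₁ <;> simp_all

lemma rowSum_split {i j : Fin n} (hij : i ≠ j) (M : Fin n → Fin n → Bool) (r : Fin n) :
    rowSum M r = (if M r i then 1 else 0) + (if M r j then 1 else 0)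
      + ∑ c ∈ Uset i j, (if M r c then 1 else 0) :=
  sum_split_s15 (fun c => if M r c then 1 else 0) hij

lemma colSum_split {i j : Fin n} (hij : i ≠ j) (M : Fin n → Fin n → Bool) (c : Fin n) :
    colSum M c = (if M i c then 1 else 0) + (if M j c then 1 else 0)
      + ∑ r ∈ Uset i j, (if M r c then 1 else 0) :=
  sum_split_s15 (fun r => if M r c then 1 else 0) hij

variable {i j : Fin n} {b c a' : Fin n → ℕ} {M M₁ : Fin n → Fin n → Bool}

/-- row pattern sums at columns i,j agree across a fiber -/
lemma pattern_eq (hij : i ≠ j) (h1 : P2 a' b M₁) (hM : P2 c b M)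
    (hfr : Fr i j M = Fr i j M₁) {r : Fin n} (hr : r ∈ Uset i j) :
    (if M r i then 1 else 0) + (if M r j then 1 else 0)
      = (if M₁ r i then (1:ℕ) else 0) + (if M₁ r j then 1 else 0) := by
  have hrow : rowSum M r = rowSum M₁ r := by rw [hM.2.1 r, h1.2.1 r]
  rw [rowSum_split hij M r, rowSum_split hij M₁ r] at hrow
  have hsum : ∑ c ∈ Uset i j, (if M r c then (1:ℕ) else 0)
      = ∑ c ∈ Uset i j, (if M₁ r c then 1 else 0) := by
    apply Finset.sum_congr rfl
    intro q hq
    simp only [Uset, mem_filter] at hq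
    rw [frame_cell hfr (Or.inr (Or.inr hq.2))]
  omega

lemma stable_eq (hij : i ≠ j) (h1 : P2 a' b M₁) (hM : P2 c b M)
    (hfr : Fr i j M = Fr i j M₁) {r : Fin n} (hr : r ∈ Uset i j)
    (he : M₁ r i = M₁ r j) : M r i = M₁ r i ∧ M r j = M₁ r j :=
  bool_sum_eq (pattern_eq hij h1 hM hfr hr) he

lemma free_eq (hij : i ≠ j) (h1 : P2 a' b M₁) (hM : P2 c b M)
    (hfr : Fr i j M = Fr i j M₁) {r : Fin n} (hr : r ∈ Uset i j)
    (he : M₁ r i ≠ M₁ r j) : M r j = !(M r i) :=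
  bool_sum_ne (pattern_eq hij h1 hM hfr hr) he


lemma Usplit (i j : Fin n) (M₁ : Fin n → Fin n → Bool) (g : Fin n → ℕ) :
    ∑ r ∈ Uset i j, g r = ∑ r ∈ Fset i j M₁, g r
      + ∑ r ∈ (Uset i j).filter (fun r => M₁ r i = M₁ r j), g r := by
  rw [Fset, ← Finset.sum_filter_add_sum_filter_not (Uset i j) (fun r => M₁ r i ≠ M₁ r j)]
  congr 1
  apply Finset.sum_congr _ (fun _ _ => rfl)
  apply Finset.filter_congr
  intro r _
  simp [not_ne_iff]

/-- The two column-count equations for a fiber member. -/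
lemma fiber_struct (hij : i ≠ j) (h1 : P2 a' b M₁) (hM : P2 c b M)
    (hfr : Fr i j M = Fr i j M₁) :
    ((Fset i j M₁).filter (fun r => M r i = true)).card
        + (if M₁ j i then 1 else 0) + t2 i j M₁ = c i
    ∧ ((Fset i j M₁).card - ((Fset i j M₁).filter (fun r => M r i = true)).card)
        + (if M₁ i j then 1 else 0) + t2 i j M₁ = c j
    ∧ ((Fset i j M₁).filter (fun r => M r i = true)).card ≤ (Fset i j M₁).card := by
  have hci := hM.2.2 i
  have hcj := hM.2.2 j
  rw [colSum_split hij M i] at hci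
  rw [colSum_split hij M j] at hcj
  have hMii : M i i = false := hM.1 i
  have hMjj : M j j = false := hM.1 j
  have hMji : M j i = M₁ j i := frame_cell hfr (Or.inr (Or.inl rfl))
  have hMij : M i j = M₁ i j := frame_cell hfr (Or.inl rfl)
  have hti : ∑ r ∈ (Uset i j).filter (fun r => M₁ r i = M₁ r j), (if M r i then (1:ℕ) else 0)
      = t2 i j M₁ := by
    apply Finset.sum_congr rfl
    intro r hr
    simp only [mem_filter] at hr
    rw [(stable_eq hij h1 hM hfr hr.1 hr.2).1]
  have htj : ∑ r ∈ (Uset i j).filter (fun r => M₁ r i = M₁ r j), (if M r j then (1:ℕ) else 0)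
      = t2 i j M₁ := by
    unfold t2
    apply Finset.sum_congr rfl
    intro r hr
    simp only [mem_filter] at hr
    rw [(stable_eq hij h1 hM hfr hr.1 hr.2).2, ← hr.2]
  have hFi : ∑ r ∈ Fset i j M₁, (if M r i then (1:ℕ) else 0)
      = ((Fset i j M₁).filter (fun r => M r i = true)).card := by
    rw [Finset.card_filter]
  have hFj : ∑ r ∈ Fset i j M₁, (if M r j then (1:ℕ) else 0)
      = (Fset i j M₁).card - ((Fset i j M₁).filter (fun r => M r i = true)).card := by
    have : ∀ r ∈ Fset i j M₁, (if M r j then (1:ℕ) else 0) = 1 - (if M r i then 1 else 0) := by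
      intro r hr
      simp only [Fset, mem_filter] at hr
      rw [free_eq hij h1 hM hfr hr.1 hr.2]
      cases M r i <;> simp
    rw [Finset.sum_congr rfl this, Finset.sum_tsub_distrib, Finset.sum_const, smul_eq_mul,
      mul_one, Finset.card_filter]
    intro r _
    split <;> omega
  rw [Usplit i j M₁, hti, hFi] at hci
  rw [Usplit i j M₁, htj, hFj] at hcj
  have hle : ((Fset i j M₁).filter (fun r => M r i = true)).card ≤ (Fset i j M₁).card :=
    Finset.card_filter_le _ _
  simp only [hMii, hMji, hMij, hMjj, Bool.false_eq_true, if_false] at hci hcj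
  refine ⟨by omega, by omega, hle⟩
def Tmap (i j : Fin n) (M₁ : Fin n → Fin n → Bool) (S : Finset (Fin n)) :
    Fin n → Fin n → Bool :=
  fun r q =>
    if r = i ∨ r = j then M₁ r q
    else if q = i then (if M₁ r i = M₁ r j then M₁ r i else decide (r ∈ S))
    else if q = j then (if M₁ r i = M₁ r j then M₁ r j else decide (r ∉ S))
    else M₁ r q

instance (c b : Fin n → ℕ) (i j : Fin n) (M₁ : Fin n → Fin n → Bool) :
    DecidablePred (fun M => P2 c b M ∧ Fr i j M = Fr i j M₁) := fun _ =>
  instDecidableAnd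

lemma mem_Fset' {r : Fin n} (h : r ∈ Fset i j M₁) :
    ¬(r = i ∨ r = j) ∧ M₁ r i ≠ M₁ r j := by
  simp only [Fset, Uset, mem_filter, mem_univ, true_and] at h
  exact ⟨not_or.mpr h.1, h.2⟩

lemma Tmap_row {S : Finset (Fin n)} {r : Fin n} (q : Fin n) (hr : r = i ∨ r = j) :
    Tmap i j M₁ S r q = M₁ r q := by simp [Tmap, hr]

lemma Tmap_out {S : Finset (Fin n)} {r q : Fin n} (hr : ¬(r = i ∨ r = j))
    (hqi : q ≠ i) (hqj : q ≠ j) : Tmap i j M₁ S r q = M₁ r q := by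
  simp [Tmap, hr, hqi, hqj]

lemma Tmap_stable (hij : i ≠ j) {S : Finset (Fin n)} {r : Fin n} (hr : ¬(r = i ∨ r = j))
    (he : M₁ r i = M₁ r j) :
    Tmap i j M₁ S r i = M₁ r i ∧ Tmap i j M₁ S r j = M₁ r j := by
  refine ⟨by simp [Tmap, hr, he], ?_⟩
  simp [Tmap, hr, hij.symm, he]

lemma Tmap_free (hij : i ≠ j) {S : Finset (Fin n)} {r : Fin n} (hr : ¬(r = i ∨ r = j))
    (he : M₁ r i ≠ M₁ r j) :
    Tmap i j M₁ S r i = decide (r ∈ S) ∧ Tmap i j M₁ S r j = decide (r ∉ S) := by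
  refine ⟨by simp [Tmap, hr, he], ?_⟩
  simp [Tmap, hr, hij.symm, he]

lemma fiber_card_s15 (hij : i ≠ j) (h1 : P2 a' b M₁)
    (hco : ∀ r, r ≠ i → r ≠ j → c r = a' r)
    (m : ℕ) (hmf : m ≤ (Fset i j M₁).card)
    (hmi : m + (if M₁ j i then 1 else 0) + t2 i j M₁ = c i)
    (hmj : ((Fset i j M₁).card - m) + (if M₁ i j then 1 else 0) + t2 i j M₁ = c j) :
    (univ.filter (fun M => P2 c b M ∧ Fr i j M = Fr i j M₁)).card
      = (Fset i j M₁).card.choose m := by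
  classical
  rw [← Finset.card_powersetCard]
  apply Finset.card_nbij' (fun M => (Fset i j M₁).filter (fun r => M r i = true))
    (Tmap i j M₁)
  · -- forward into powersetCard
    intro M hM
    simp only [Finset.mem_coe, mem_filter, mem_univ, true_and] at hM
    obtain ⟨hP, hfr⟩ := hM
    have hs := fiber_struct hij h1 hP hfr
    rw [Finset.mem_coe, Finset.mem_powersetCard]
    exact ⟨Finset.filter_subset _ _, by beta_reduce; omega⟩
  · -- backward into fiber
    intro S hS
    rw [Finset.mem_coe, Finset.mem_powersetCard] at hS
    obtain ⟨hSF, hScard⟩ := hS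
    simp only [Finset.mem_coe, mem_filter, mem_univ, true_and]
    have hfilS : (Fset i j M₁).filter (fun r => r ∈ S) = S := by
      ext r
      simp only [mem_filter]
      exact ⟨And.right, fun h => ⟨hSF h, h⟩⟩
    have hfilnS : (Fset i j M₁).filter (fun r => r ∉ S) = Fset i j M₁ \ S := by
      ext r
      simp [mem_filter, mem_sdiff]
    refine ⟨⟨?_, ?_, ?_⟩, ?_⟩
    · -- diagonal
      intro r
      by_cases hr : r = i ∨ r = j
      · rw [Tmap_row r hr]; exact h1.1 r
      · rw [Tmap_out hr (not_or.mp hr).1 (not_or.mp hr).2]; exact h1.1 r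
    · -- row sums
      intro r
      by_cases hr : r = i ∨ r = j
      · have : rowSum (Tmap i j M₁ S) r = rowSum M₁ r := by
          unfold rowSum
          exact Finset.sum_congr rfl (fun q _ => by rw [Tmap_row q hr])
        rw [this, h1.2.1 r]
      · rw [rowSum_split hij _ r, ← h1.2.1 r, rowSum_split hij M₁ r]
        have hU : ∑ q ∈ Uset i j, (if Tmap i j M₁ S r q then (1:ℕ) else 0)
            = ∑ q ∈ Uset i j, (if M₁ r q then 1 else 0) := by
          apply Finset.sum_congr rfl
          intro q hq
          simp only [Uset, mem_filter, mem_univ, true_and] at hq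
          rw [Tmap_out hr hq.1 hq.2]
        rw [hU]
        by_cases he : M₁ r i = M₁ r j
        · rw [(Tmap_stable hij hr he).1, (Tmap_stable hij hr he).2]
        · rw [(Tmap_free hij hr he).1, (Tmap_free hij hr he).2]
          by_cases hrS : r ∈ S <;> cases hbi : M₁ r i <;> cases hbj : M₁ r j <;>
            simp_all
    · -- column sums
      intro q
      by_cases hqi : q = i
      · rw [hqi]
        rw [colSum_split hij _ i, Tmap_row i (Or.inl rfl), Tmap_row i (Or.inr rfl),
          h1.1 i, Usplit i j M₁]
        have hF : ∑ r ∈ Fset i j M₁, (if Tmap i j M₁ S r i then (1:ℕ) else 0) = m := by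
          have : ∀ r ∈ Fset i j M₁,
              (if Tmap i j M₁ S r i then (1:ℕ) else 0) = (if r ∈ S then 1 else 0) := by
            intro r hrF
            obtain ⟨hr, he⟩ := mem_Fset' hrF
            rw [(Tmap_free hij hr he).1]
            by_cases hrS : r ∈ S <;> simp [hrS]
          rw [Finset.sum_congr rfl this, ← Finset.card_filter, hfilS, hScard]
        have hst : ∑ r ∈ (Uset i j).filter (fun r => M₁ r i = M₁ r j),
            (if Tmap i j M₁ S r i then (1:ℕ) else 0) = t2 i j M₁ := by
          apply Finset.sum_congr rfl
          intro r hrs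
          simp only [mem_filter, Uset, mem_univ, true_and] at hrs
          rw [(Tmap_stable hij (not_or.mpr hrs.1) hrs.2).1]
        rw [hF, hst]
        simp only [h1.1 i, Bool.false_eq_true, if_false]
        omega
      · by_cases hqj : q = j
        · rw [hqj]
          rw [colSum_split hij _ j, Tmap_row j (Or.inl rfl), Tmap_row j (Or.inr rfl),
            Usplit i j M₁]
          have hF : ∑ r ∈ Fset i j M₁, (if Tmap i j M₁ S r j then (1:ℕ) else 0)
              = (Fset i j M₁).card - m := by
            have : ∀ r ∈ Fset i j M₁,
                (if Tmap i j M₁ S r j then (1:ℕ) else 0) = (if r ∉ S then 1 else 0) := by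
              intro r hrF
              obtain ⟨hr, he⟩ := mem_Fset' hrF
              rw [(Tmap_free hij hr he).2]
              by_cases hrS : r ∈ S <;> simp [hrS]
            rw [Finset.sum_congr rfl this, ← Finset.card_filter, hfilnS,
              Finset.card_sdiff_of_subset hSF, hScard]
          have hst : ∑ r ∈ (Uset i j).filter (fun r => M₁ r i = M₁ r j),
              (if Tmap i j M₁ S r j then (1:ℕ) else 0) = t2 i j M₁ := by
            unfold t2
            apply Finset.sum_congr rfl
            intro r hrs
            simp only [mem_filter, Uset, mem_univ, true_and] at hrs
            rw [(Tmap_stable hij (not_or.mpr hrs.1) hrs.2).2, ← hrs.2]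
          rw [hF, hst]
          simp only [h1.1 j, Bool.false_eq_true, if_false]
          omega
        · have : colSum (Tmap i j M₁ S) q = colSum M₁ q := by
            unfold colSum
            apply Finset.sum_congr rfl
            intro r _
            by_cases hr : r = i ∨ r = j
            · rw [Tmap_row q hr]
            · rw [Tmap_out hr hqi hqj]
          rw [this, h1.2.2 q, hco q hqi hqj]
    · -- frame equality
      funext r q
      simp only [Fr]
      by_cases hcond : r = i ∨ r = j ∨ (q ≠ i ∧ q ≠ j)
      · simp only [hcond, if_true]
        rcases hcond with h | h | h
        · exact Tmap_row q (Or.inl h)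
        · exact Tmap_row q (Or.inr h)
        · by_cases hr : r = i ∨ r = j
          · exact Tmap_row q hr
          · exact Tmap_out hr h.1 h.2
      · simp only [hcond, if_false]
  · -- left inverse
    intro M hM
    simp only [Finset.mem_coe, mem_filter, mem_univ, true_and] at hM
    obtain ⟨hP, hfr⟩ := hM
    funext r q
    by_cases hr : r = i ∨ r = j
    · rw [Tmap_row q hr]
      exact (frame_cell hfr (hr.imp id Or.inl)).symm
    · have hrU : r ∈ Uset i j := by
        simp only [Uset, mem_filter, mem_univ, true_and]
        exact not_or.mp hr
      by_cases hqi : q = i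
      · rw [hqi]
        by_cases he : M₁ r i = M₁ r j
        · rw [(Tmap_stable hij hr he).1]
          exact ((stable_eq hij h1 hP hfr hrU he).1).symm
        · rw [(Tmap_free hij hr he).1]
          by_cases hMr : M r i = true
          · simp [mem_filter, Fset, Uset, not_or.mp hr, he, hMr]
          · simp only [Bool.not_eq_true] at hMr
            simp [mem_filter, hMr]
      · by_cases hqj : q = j
        · rw [hqj]
          by_cases he : M₁ r i = M₁ r j
          · rw [(Tmap_stable hij hr he).2]
            exact ((stable_eq hij h1 hP hfr hrU he).2).symm
          · rw [(Tmap_free hij hr he).2, free_eq hij h1 hP hfr hrU he]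
            by_cases hMr : M r i = true
            · simp [mem_filter, Fset, Uset, not_or.mp hr, he, hMr]
            · simp only [Bool.not_eq_true] at hMr
              simp [mem_filter, Fset, Uset, not_or.mp hr, he, hMr]
        · rw [Tmap_out hr hqi hqj]
          exact (frame_cell hfr (Or.inr (Or.inr ⟨hqi, hqj⟩))).symm
  · -- right inverse
    intro S hS
    rw [Finset.mem_coe, Finset.mem_powersetCard] at hS
    obtain ⟨hSF, _⟩ := hS
    ext r
    simp only [mem_filter]
    constructor
    · rintro ⟨hrF, hTr⟩
      obtain ⟨hr, he⟩ := mem_Fset' hrF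
      rw [(Tmap_free hij hr he).1] at hTr
      simpa using hTr
    · intro hrS
      have hrF := hSF hrS
      obtain ⟨hr, he⟩ := mem_Fset' hrF
      refine ⟨hrF, ?_⟩
      rw [(Tmap_free hij hr he).1]
      simpa
lemma choose_le_pred {f κ : ℕ} (h1 : 1 ≤ κ) (h2 : f + 1 ≤ 2*κ) :
    f.choose κ ≤ f.choose (κ-1) := by
  rcases Nat.lt_or_ge f κ with h | h
  · simp [Nat.choose_eq_zero_of_lt h]
  · obtain ⟨k, rfl⟩ : ∃ k, κ = k + 1 := ⟨κ - 1, by omega⟩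
    have hid := Nat.choose_succ_right_eq f k
    have hmul : f.choose (k+1) * (k+1) ≤ f.choose k * (k+1) := by
      rw [hid]
      exact Nat.mul_le_mul_left _ (by omega)
    simpa using Nat.le_of_mul_le_mul_right hmul (by omega)

lemma choose_lt_pred {f κ : ℕ} (h1 : 1 ≤ κ) (h2 : f + 2 ≤ 2*κ) (h3 : κ ≤ f) :
    f.choose κ < f.choose (κ-1) := by
  obtain ⟨k, rfl⟩ : ∃ k, κ = k + 1 := ⟨κ - 1, by omega⟩
  have hid := Nat.choose_succ_right_eq f k
  have hpos : 0 < f.choose k := Nat.choose_pos (by omega)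
  have hmul : f.choose (k+1) * (k+1) < f.choose k * (k+1) := by
    rw [hid]
    calc f.choose k * (f - k) ≤ f.choose k * k := Nat.mul_le_mul_left _ (by omega)
      _ < f.choose k * (k+1) := (Nat.mul_lt_mul_left hpos).mpr (by omega)
  have := lt_of_mul_lt_mul_right hmul (Nat.zero_le (k+1))
  simpa using this

lemma fiber_le {a : Fin n → ℕ} (hij : i ≠ j) (htr : a' j + 2 ≤ a' i)
    (hai : a i + 1 = a' i) (haj : a j = a' j + 1)
    (hao : ∀ r, r ≠ i → r ≠ j → a r = a' r) (φ : Fin n → Fin n → Bool) :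
    (univ.filter (fun M => P2 a' b M ∧ Fr i j M = φ)).card
      ≤ (univ.filter (fun M => P2 a b M ∧ Fr i j M = φ)).card := by
  rcases Finset.eq_empty_or_nonempty
      (univ.filter (fun M => P2 a' b M ∧ Fr i j M = φ)) with he | ⟨M₁, hM₁⟩
  · simp [he]
  · simp only [mem_filter, mem_univ, true_and] at hM₁
    obtain ⟨hP1, hfr⟩ := hM₁
    rw [← hfr]
    obtain ⟨E1, E2, E3⟩ := fiber_struct hij hP1 hP1 rfl
    have hb1 : (if M₁ j i then (1:ℕ) else 0) ≤ 1 := by split <;> omega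
    have hb2 : (if M₁ i j then (1:ℕ) else 0) ≤ 1 := by split <;> omega
    set κ := ((Fset i j M₁).filter (fun r => M₁ r i = true)).card with hκ
    set f := (Fset i j M₁).card with hf
    rw [fiber_card_s15 (c := a') hij hP1 (fun _ _ _ => rfl) κ E3 E1 E2]
    rw [fiber_card_s15 (c := a) hij hP1 hao (κ - 1) (by omega) (by omega) (by omega)]
    exact choose_le_pred (by omega) (by omega)

lemma fiber_lt {a : Fin n → ℕ} (hij : i ≠ j) (htr : a' j + 2 ≤ a' i)
    (hai : a i + 1 = a' i) (haj : a j = a' j + 1)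
    (hao : ∀ r, r ≠ i → r ≠ j → a r = a' r)
    (hP1 : P2 a' b M₁)
    (hstr : M₁ i j = true ∨ M₁ j i = false ∨ a' j + 3 ≤ a' i) :
    (univ.filter (fun M => P2 a' b M ∧ Fr i j M = Fr i j M₁)).card
      < (univ.filter (fun M => P2 a b M ∧ Fr i j M = Fr i j M₁)).card := by
  obtain ⟨E1, E2, E3⟩ := fiber_struct hij hP1 hP1 rfl
  have hb1 : (if M₁ j i then (1:ℕ) else 0) ≤ 1 := by split <;> omega
  have hb2 : (if M₁ i j then (1:ℕ) else 0) ≤ 1 := by split <;> omega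
  have hstr' : (if M₁ i j then (1:ℕ) else 0) = 1 ∨ (if M₁ j i then (1:ℕ) else 0) = 0
      ∨ a' j + 3 ≤ a' i := by
    rcases hstr with h | h | h
    · left; simp [h]
    · right; left; simp [h]
    · right; right; exact h
  set κ := ((Fset i j M₁).filter (fun r => M₁ r i = true)).card with hκ
  set f := (Fset i j M₁).card with hf
  rw [fiber_card_s15 (c := a') hij hP1 (fun _ _ _ => rfl) κ E3 E1 E2]
  rw [fiber_card_s15 (c := a) hij hP1 hao (κ - 1) (by omega) (by omega) (by omega)]
  exact choose_lt_pred (by omega) (by omega) E3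
lemma tswitch {a : Fin n → ℕ} {M₀ : Fin n → Fin n → Bool} (hij : i ≠ j)
    (hP : P2 a' b M₀) (h0ij : M₀ i j = false) (h0ji : M₀ j i = true)
    (hai : a i + 1 = a' i) (haj : a j = a' j + 1)
    (hao : ∀ r, r ≠ i → r ≠ j → a r = a' r) (hb : b j ≤ b i) :
    ∃ N : Fin n → Fin n → Bool, P2 a b N ∧ N i j = true := by
  -- find a column q ∉ {i,j} with M₀ i q = true, M₀ j q = false
  have hri := hP.2.1 i
  have hrj := hP.2.1 j
  rw [rowSum_split hij M₀ i] at hri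
  rw [rowSum_split hij M₀ j] at hrj
  rw [hP.1 i, h0ij] at hri
  rw [h0ji, hP.1 j] at hrj
  simp only [Bool.false_eq_true, if_false, if_true] at hri hrj
  have hsum : ∑ c ∈ Uset i j, (if M₀ j c then (1:ℕ) else 0)
      < ∑ c ∈ Uset i j, (if M₀ i c then 1 else 0) := by omega
  obtain ⟨q, hqU, hqlt⟩ := Finset.exists_lt_of_sum_lt hsum
  simp only [Uset, mem_filter, mem_univ, true_and] at hqU
  obtain ⟨hqi, hqj⟩ := hqU
  have hiq : M₀ i q = true := by
    revert hqlt; cases M₀ i q <;> cases M₀ j q <;> simp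
  have hjq : M₀ j q = false := by
    revert hqlt; cases M₀ i q <;> cases M₀ j q <;> simp
  set N : Fin n → Fin n → Bool := fun r c =>
    if r = i ∧ c = q then false
    else if r = i ∧ c = j then true
    else if r = j ∧ c = q then true
    else if r = j ∧ c = i then false
    else M₀ r c with hN
  have hNiq : N i q = false := by simp [hN]
  have hNij : N i j = true := by simp [hN, Ne.symm hqj, hij]
  have hNjq : N j q = true := by simp [hN, Ne.symm hij]
  have hNji : N j i = false := by simp [hN, Ne.symm hij, Ne.symm hqi, hij]
  have hNrowi : ∀ c, c ≠ q → c ≠ j → N i c = M₀ i c := by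
    intro c h1 h2; simp [hN, h1, h2, hij]
  have hNrowj : ∀ c, c ≠ q → c ≠ i → N j c = M₀ j c := by
    intro c h1 h2; simp [hN, h1, h2, Ne.symm hij]
  have hNother : ∀ r c, r ≠ i → r ≠ j → N r c = M₀ r c := by
    intro r c h1 h2; simp [hN, h1, h2]
  refine ⟨N, ⟨?_, ?_, ?_⟩, hNij⟩
  · -- diagonal
    intro r
    by_cases h1 : r = i
    · rw [h1, hNrowi i (Ne.symm hqi) hij]; exact hP.1 i
    · by_cases h2 : r = j
      · rw [h2, hNrowj j (Ne.symm hqj) (Ne.symm hij)]; exact hP.1 j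
      · rw [hNother r r h1 h2]; exact hP.1 r
  · -- row sums
    intro r
    by_cases h1 : r = i
    · rw [h1]
      have hS : ∑ c ∈ Uset q j, (if N i c then (1:ℕ) else 0)
          = ∑ c ∈ Uset q j, (if M₀ i c then 1 else 0) := by
        apply Finset.sum_congr rfl
        intro c hc
        simp only [Uset, mem_filter, mem_univ, true_and] at hc
        rw [hNrowi c hc.1 hc.2]
      have hr0 := hP.2.1 i
      rw [rowSum_split hqj M₀ i, hiq, h0ij] at hr0
      rw [rowSum_split hqj N i, hNiq, hNij, hS]
      simp only [Bool.false_eq_true, if_false, if_true] at hr0 ⊢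
      omega
    · by_cases h2 : r = j
      · rw [h2]
        have hS : ∑ c ∈ Uset q i, (if N j c then (1:ℕ) else 0)
            = ∑ c ∈ Uset q i, (if M₀ j c then 1 else 0) := by
          apply Finset.sum_congr rfl
          intro c hc
          simp only [Uset, mem_filter, mem_univ, true_and] at hc
          rw [hNrowj c hc.1 hc.2]
        have hr0 := hP.2.1 j
        rw [rowSum_split hqi M₀ j, hjq, h0ji] at hr0
        rw [rowSum_split hqi N j, hNjq, hNji, hS]
        simp only [Bool.false_eq_true, if_false, if_true] at hr0 ⊢
        omega
      · rw [← hP.2.1 r]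
        apply Finset.sum_congr rfl
        intro c _
        rw [hNother r c h1 h2]
  · -- column sums
    intro c
    have hS : ∀ c', ∑ r ∈ Uset i j, (if N r c' then (1:ℕ) else 0)
        = ∑ r ∈ Uset i j, (if M₀ r c' then 1 else 0) := by
      intro c'
      apply Finset.sum_congr rfl
      intro r hr
      simp only [Uset, mem_filter, mem_univ, true_and] at hr
      rw [hNother r c' hr.1 hr.2]
    by_cases h1 : c = i
    · rw [h1]
      have hc0 := hP.2.2 i
      rw [colSum_split hij M₀ i, h0ji] at hc0
      rw [colSum_split hij N i, hNrowi i (Ne.symm hqi) hij, hNji, hS]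
      simp only [if_true, Bool.false_eq_true, if_false] at hc0 ⊢
      omega
    · by_cases h2 : c = j
      · rw [h2]
        have hc0 := hP.2.2 j
        rw [colSum_split hij M₀ j, h0ij] at hc0
        rw [colSum_split hij N j, hNij, hNrowj j (Ne.symm hqj) (Ne.symm hij), hS]
        simp only [if_true, Bool.false_eq_true, if_false] at hc0 ⊢
        omega
      · by_cases h3 : c = q
        · rw [h3]
          have hc0 := hP.2.2 q
          rw [colSum_split hij M₀ q, hiq, hjq] at hc0
          rw [colSum_split hij N q, hNiq, hNjq, hS, hao q hqi hqj]
          simp only [if_true, Bool.false_eq_true, if_false] at hc0 ⊢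
          omega
        · have hc0 := hP.2.2 c
          rw [colSum_split hij M₀ c] at hc0
          rw [colSum_split hij N c, hNrowi c h3 h2, hNrowj c h3 h1, hS, hao c h1 h2]
          omega
lemma N2_eq (c b : Fin n → ℕ) : N2 c b = (univ.filter (P2 c b)).card := by
  rw [N2, Nat.card_eq_fintype_card, Fintype.card_subtype]
  congr 1

theorem main {a a' b : Fin n → ℕ} {i j : Fin n}
    (hlex : ∀ p q : Fin n, p ≤ q → (a q < a p ∨ (a p = a q ∧ b q ≤ b p)))
    (hij : i < j) (htr : a' j + 2 ≤ a' i)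
    (ha : a = Function.update (Function.update a' i (a' i - 1)) j (a' j + 1))
    (hd' : 0 < N2 a' b) :
    N2 a' b < N2 a b := by
  have hij' : i ≠ j := Fin.ne_of_lt hij
  have hai : a i + 1 = a' i := by
    rw [ha]
    rw [Function.update_of_ne hij', Function.update_self]
    omega
  have haj : a j = a' j + 1 := by rw [ha, Function.update_self]
  have hao : ∀ r, r ≠ i → r ≠ j → a r = a' r := by
    intro r h1 h2
    rw [ha, Function.update_of_ne h2, Function.update_of_ne h1]
  rw [N2_eq, N2_eq]
  rw [Finset.card_eq_sum_card_fiberwise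
    (f := Fr i j) (t := univ) (fun _ _ => mem_univ _)]
  rw [Finset.card_eq_sum_card_fiberwise
    (f := Fr i j) (t := univ) (fun _ _ => mem_univ _)]
  simp only [Finset.filter_filter]
  apply Finset.sum_lt_sum
  · intro φ _
    exact fiber_le hij' htr hai haj hao φ
  · -- strict fiber
    have hne : (univ.filter (P2 a' b)).Nonempty := by
      rw [← Finset.card_pos, ← N2_eq]
      exact hd'
    obtain ⟨M₀, hM₀⟩ := hne
    simp only [mem_filter, mem_univ, true_and] at hM₀
    by_cases hcase : M₀ i j = true ∨ M₀ j i = false ∨ a' j + 3 ≤ a' i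
    · exact ⟨Fr i j M₀, mem_univ _, fiber_lt hij' htr hai haj hao hM₀ hcase⟩
    · push_neg at hcase
      obtain ⟨h0ij, h0ji, _⟩ := hcase
      have h0ij' : M₀ i j = false := by simpa using h0ij
      have h0ji' : M₀ j i = true := by simpa using h0ji
      have haij : a i = a j := by omega
      have hb : b j ≤ b i := by
        rcases hlex i j (le_of_lt hij) with h | h
        · omega
        · exact h.2
      obtain ⟨N, hPN, hNij⟩ := tswitch hij' hM₀ h0ij' h0ji' hai haj hao hb
      refine ⟨Fr i j N, mem_univ _, ?_⟩
      rcases Finset.eq_empty_or_nonempty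
          (univ.filter (fun M => P2 a' b M ∧ Fr i j M = Fr i j N)) with hemp | ⟨M₁, hM₁⟩
      · rw [hemp]
        simp only [Finset.card_empty]
        apply Finset.card_pos.mpr
        exact ⟨N, by simp [hPN]⟩
      · simp only [mem_filter, mem_univ, true_and] at hM₁
        obtain ⟨hP1, hfr1⟩ := hM₁
        have hM1ij : M₁ i j = true := by
          rw [frame_cell hfr1 (Or.inl rfl), hNij]
        rw [← hfr1]
        exact fiber_lt hij' htr hai haj hao hP1 (Or.inl hM1ij)
end aux


theorem stmt15 {n : ℕ} (a a' b : Fin n → ℕ) (i j : Fin n)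
    (hlex : LexNonincreasing a b) (ht : UnitTransfer a' a i j)
    (hd' : Digraphic a' b) :
    N2 a' b < N2 a b :=
  main hlex ht.1 ht.2.1 ht.2.2 hd'
end
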